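/- If [x]t is a function-open normal planar lambda term (a normal planar term with one free variable x containing a subterm of the form x(u)), then there exists a unique pair of normal planar terms [x]t₁ and [y]t₂, each with one free variable, such that t is obtained from t₁ by replacing the unique occurrence of its free variable x with x(λy.t₂); in particular the argument of x in t is a closed normal planar term λy.t₂. Moreover the size of t equals the size of t₁ plus the size of t₂. -/

import Mathlib

/-- Lambda skeletons `Λ̃(i)`, graded by degree. -/
inductive Skel : ℕ → Type
  | leaf : Skel 1
  | app : {j k : ℕ} → Skel j → Skel k → Skel (j + k)
  | lam : {i : ℕ} → Skel (i + 1) → Skel i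

/-- Raw (pseudo) lambda terms with named variables. -/
inductive Term : Type
  | var : ℕ → Term
  | app : Term → Term → Term
  | lam : ℕ → Term → Term
  deriving DecidableEq

/-- `Planar Γ t p`: `t` is a planar lambda term with free variables `Γ`
decorating the skeleton `p` (derivable without the exchange rule). -/
inductive Planar : {i : ℕ} → List ℕ → Term → Skel i → Prop
  | var (x : ℕ) : Planar [x] (Term.var x) Skel.leaf
  | app {j k : ℕ} {Γ Δ : List ℕ} {t u : Term} {p : Skel j} {q : Skel k} :
      Planar Γ t p → Planar Δ u q → Planar (Γ ++ Δ) (Term.app t u) (Skel.app p q)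
  | lam {i x : ℕ} {Γ : List ℕ} {t : Term} {p : Skel (i + 1)} :
      Planar (x :: Γ) t p → Planar Γ (Term.lam x t) (Skel.lam p)

/-- α-equivalence of linear lambda terms-in-context: `[Γ]t` and `[Δ]u` are
α-equivalent when one is obtained from the other by a (positional) renaming of
the context variables and of the variables introduced by lambda abstraction. -/
inductive Aeq : List ℕ → Term → List ℕ → Term → Prop
  | var (x y : ℕ) : Aeq [x] (Term.var x) [y] (Term.var y)
  | app {Γ₁ Γ₂ Δ₁ Δ₂ : List ℕ} {t₁ t₂ u₁ u₂ : Term} :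
      Aeq Γ₁ t₁ Δ₁ u₁ → Aeq Γ₂ t₂ Δ₂ u₂ →
      Aeq (Γ₁ ++ Γ₂) (Term.app t₁ t₂) (Δ₁ ++ Δ₂) (Term.app u₁ u₂)
  | lam {x y : ℕ} {Γ Δ : List ℕ} {t u : Term} :
      Aeq (x :: Γ) t (y :: Δ) u → Aeq Γ (Term.lam x t) Δ (Term.lam y u)

/-- The two colors: `B` ("blue", neutral) and `R` ("red", normal). -/
inductive Color : Type
  | B : Color
  | R : Color
  deriving DecidableEq

/-- `Col c i p`: colorings (derivations of neutrality for `c = B`,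
respectively normality for `c = R`) of the skeleton `p` of degree `i`,
by the rules (v), (a), (s), (ℓ). -/
inductive Col : Color → (i : ℕ) → Skel i → Type
  | v : Col Color.B 1 Skel.leaf
  | a {j k : ℕ} {p : Skel j} {q : Skel k} :
      Col Color.B j p → Col Color.R k q → Col Color.B (j + k) (Skel.app p q)
  | s {i : ℕ} {p : Skel i} : Col Color.B i p → Col Color.R i p
  | l {i : ℕ} {p : Skel (i + 1)} : Col Color.R (i + 1) p → Col Color.R i (Skel.lam p)

/-- The size of a coloring: the number of uses of the s-rule in it. -/
def Col.size : {c : Color} → {i : ℕ} → {p : Skel i} → Col c i p → ℕ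
  | _, _, _, Col.v => 0
  | _, _, _, Col.a d e => d.size + e.size
  | _, _, _, Col.s d => d.size + 1
  | _, _, _, Col.l d => d.size

/-- The subterm relation on raw lambda terms. -/
inductive Subterm : Term → Term → Prop
  | refl (t : Term) : Subterm t t
  | appL {s t u : Term} : Subterm s t → Subterm s (Term.app t u)
  | appR {s t u : Term} : Subterm s u → Subterm s (Term.app t u)
  | lam {s t : Term} {x : ℕ} : Subterm s t → Subterm s (Term.lam x t)

/-- A term contains a β-redex iff it has a subterm of the form `(λx.b)(u)`. -/
def HasRedex (t : Term) : Prop :=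
  ∃ (x : ℕ) (b u : Term), Subterm (Term.app (Term.lam x b) u) t

/-- All lambda-binder names occurring in a term. -/
def tBinders : Term → List ℕ
  | Term.var _ => []
  | Term.app t u => tBinders t ++ tBinders u
  | Term.lam x t => x :: tBinders t

/-- All variable names (occurrences and binders) occurring in a term. -/
def allVars : Term → List ℕ
  | Term.var x => [x]
  | Term.app t u => allVars t ++ allVars u
  | Term.lam x t => x :: allVars t

/-- `[x]t` is the identity term. -/
def IsIdA (x : ℕ) (t : Term) : Prop := t = Term.var x

/-- `[x]t` is function-open: up to α-equivalence (choosing a representative in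
which the free variable is not shadowed by any binder), the free variable is
applied to some argument, i.e. `y(u)` is a subterm. -/
def FunctionOpenA (x : ℕ) (t : Term) : Prop :=
  ∃ (y : ℕ) (t' : Term), Aeq [x] t [y] t' ∧ y ∉ tBinders t' ∧
    ∃ u : Term, Subterm (Term.app (Term.var y) u) t'

/-- `[x]t` is value-open: up to α-equivalence (choosing a representative in
which the free variable is not shadowed by any binder), the free variable
occurs as the argument of an application, i.e. `u(y)` is a subterm. -/
def ValueOpenA (x : ℕ) (t : Term) : Prop :=
  ∃ (y : ℕ) (t' : Term), Aeq [x] t [y] t' ∧ y ∉ tBinders t' ∧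
    ∃ u : Term, Subterm (Term.app u (Term.var y)) t'

/-- One-hole contexts for lambda terms. -/
inductive Ctx : Type
  | hole : Ctx
  | appL : Ctx → Term → Ctx
  | appR : Term → Ctx → Ctx
  | lam : ℕ → Ctx → Ctx

/-- Filling the hole of a context with a term. -/
def Ctx.fill : Ctx → Term → Term
  | Ctx.hole, u => u
  | Ctx.appL C t, u => Term.app (C.fill u) t
  | Ctx.appR t C, u => Term.app t (C.fill u)
  | Ctx.lam x C, u => Term.lam x (C.fill u)

/-- The binders on the path from the root to the hole of a context. -/
def Ctx.binders : Ctx → List ℕ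
  | Ctx.hole => []
  | Ctx.appL C _ => C.binders
  | Ctx.appR _ C => C.binders
  | Ctx.lam x C => x :: C.binders


/-- `FunDecomp x t π y t₁ t₂ C` expresses that the function-open normal planar
term `[x]t` (with R-coloring `π`) decomposes into the pair of normal planar
terms `[x]t₁` and `[y]t₂`: `t` is obtained (up to α-equivalence) from `t₁` by
replacing the unique occurrence of its free variable `x` (located at the hole
of the context `C`, not captured by any binder of `C`) with `x(λy.t₂)`;
in particular the argument of `x` in `t` is the closed normal planar term
`λy.t₂`. Moreover the size of `t` is the sum of the sizes of `t₁` and `t₂`. -/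
def FunDecomp (x : ℕ) (t : Term) {p : Skel 1} (π : Col Color.R 1 p)
    (y : ℕ) (t₁ t₂ : Term) (C : Ctx) : Prop :=
  t₁ = C.fill (Term.var x) ∧ x ∉ C.binders ∧
  Aeq [x] t [x] (C.fill (Term.app (Term.var x) (Term.lam y t₂))) ∧
  ∃ (p₁ p₂ : Skel 1) (π₁ : Col Color.R 1 p₁) (π₂ : Col Color.R 1 p₂),
    Planar [x] t₁ p₁ ∧ Planar [y] t₂ p₂ ∧
    Col.size π = Col.size π₁ + Col.size π₂

-- test basic lemmas
lemma planar_length {i : ℕ} {Γ : List ℕ} {t : Term} {p : Skel i}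
    (h : Planar Γ t p) : Γ.length = i := by
  induction h with
  | var => rfl
  | app h1 h2 ih1 ih2 => simp [ih1, ih2]
  | lam h ih => simpa using ih

def tdeg : Term → ℤ
  | Term.var _ => 1
  | Term.app a b => tdeg a + tdeg b
  | Term.lam _ t => tdeg t - 1

lemma planar_deg {i : ℕ} {Γ : List ℕ} {t : Term} {p : Skel i}
    (h : Planar Γ t p) : (Γ.length : ℤ) = tdeg t := by
  induction h with
  | var => rfl
  | app h1 h2 ih1 ih2 => simp [tdeg, ← ih1, ← ih2]
  | lam h ih => simp only [tdeg, ← ih]; simp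

lemma aeq_deg {Γ Δ : List ℕ} {t u : Term} (h : Aeq Γ t Δ u) :
    (Γ.length : ℤ) = tdeg t ∧ (Δ.length : ℤ) = tdeg u := by
  induction h with
  | var => exact ⟨rfl, rfl⟩
  | app h1 h2 ih1 ih2 => simp [tdeg, ← ih1.1, ← ih1.2, ← ih2.1, ← ih2.2]
  | lam h ih =>
    obtain ⟨ih1, ih2⟩ := ih
    constructor
    · simp only [tdeg]; simp at ih1; omega
    · simp only [tdeg]; simp at ih2; omega

lemma planar_var_inv {i : ℕ} {Γ : List ℕ} {w : ℕ} {p : Skel i}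
    (h : Planar Γ (Term.var w) p) :
    Γ = [w] ∧ (⟨i, p⟩ : Σ n, Skel n) = ⟨1, Skel.leaf⟩ := by
  cases h; exact ⟨rfl, rfl⟩

lemma planar_app_inv {i : ℕ} {Γ : List ℕ} {a b : Term} {p : Skel i}
    (h : Planar Γ (Term.app a b) p) :
    ∃ (j k : ℕ) (pL : Skel j) (pR : Skel k) (Γ1 Γ2 : List ℕ),
      Γ = Γ1 ++ Γ2 ∧ Planar Γ1 a pL ∧ Planar Γ2 b pR ∧
      (⟨i, p⟩ : Σ n, Skel n) = ⟨j + k, Skel.app pL pR⟩ := by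
  cases h with
  | app h1 h2 => exact ⟨_, _, _, _, _, _, rfl, h1, h2, rfl⟩

lemma planar_lam_inv {i : ℕ} {Γ : List ℕ} {y : ℕ} {t : Term} {p : Skel i}
    (h : Planar Γ (Term.lam y t) p) :
    ∃ (p₀ : Skel (i + 1)), Planar (y :: Γ) t p₀ ∧ p = Skel.lam p₀ := by
  cases h with
  | lam h => exact ⟨_, h, rfl⟩
def sProj : (Σ n, Skel n) → Option ((Σ n, Skel n) × (Σ n, Skel n))
  | ⟨_, Skel.app p q⟩ => some (⟨_, p⟩, ⟨_, q⟩)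
  | ⟨_, Skel.leaf⟩ => none
  | ⟨_, Skel.lam _⟩ => none

def sLamProj : (Σ n, Skel n) → Option (Σ n, Skel n)
  | ⟨_, Skel.lam p⟩ => some ⟨_, p⟩
  | ⟨_, Skel.leaf⟩ => none
  | ⟨_, Skel.app _ _⟩ => none

lemma sigma_app_inj {j k j' k' : ℕ} {pL : Skel j} {pR : Skel k}
    {pL' : Skel j'} {pR' : Skel k'}
    (h : (⟨j + k, Skel.app pL pR⟩ : Σ n, Skel n) = ⟨j' + k', Skel.app pL' pR'⟩) :
    (⟨j, pL⟩ : Σ n, Skel n) = ⟨j', pL'⟩ ∧ (⟨k, pR⟩ : Σ n, Skel n) = ⟨k', pR'⟩ := by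
  have h2 := congrArg sProj h
  simp only [sProj, Option.some.injEq, Prod.mk.injEq] at h2
  exact h2

lemma sigma_skel_eq {j j' : ℕ} {p : Skel j} {p' : Skel j'}
    (h : (⟨j, p⟩ : Σ n, Skel n) = ⟨j', p'⟩) : j = j' ∧ HEq p p' := by
  rcases h; exact ⟨rfl, HEq.rfl⟩

lemma sigma_leaf_ne_app {j k : ℕ} {pL : Skel j} {pR : Skel k}
    (h : (⟨1, Skel.leaf⟩ : Σ m, Skel m) = ⟨j + k, Skel.app pL pR⟩) : False := by
  have h2 := congrArg sProj h
  simp only [sProj] at h2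
  exact absurd h2 (by simp)

lemma sigma_lam_ne_app {i j k : ℕ} {p₀ : Skel (i+1)} {pL : Skel j} {pR : Skel k}
    (h : (⟨i, Skel.lam p₀⟩ : Σ m, Skel m) = ⟨j + k, Skel.app pL pR⟩) : False := by
  have h2 := congrArg sProj h
  simp only [sProj] at h2
  exact absurd h2 (by simp)

lemma sigma_lam_inj {i i' : ℕ} {p : Skel (i+1)} {p' : Skel (i'+1)}
    (h : (⟨i, Skel.lam p⟩ : Σ m, Skel m) = ⟨i', Skel.lam p'⟩) :
    (⟨i+1, p⟩ : Σ m, Skel m) = ⟨i'+1, p'⟩ := by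
  have h2 := congrArg sLamProj h
  simpa only [sLamProj, Option.some.injEq] using h2
def relabel (b : ℕ) : {i : ℕ} → Skel i → List ℕ → Term
  | _, Skel.leaf, Δ => Term.var Δ.headI
  | _, @Skel.app j _ p q, Δ => Term.app (relabel b p (Δ.take j)) (relabel b q (Δ.drop j))
  | _, Skel.lam p, Δ => Term.lam b (relabel b p (b :: Δ))

lemma relabel_planar (b : ℕ) : ∀ {i : ℕ} (p : Skel i) (Δ : List ℕ),
    Δ.length = i → Planar Δ (relabel b p Δ) p := by
  intro i p
  induction p with
  | leaf =>
    intro Δ hΔ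
    match Δ, hΔ with
    | [w], _ => exact Planar.var w
  | @app j k pL pR ihL ihR =>
    intro Δ hΔ
    have h1 : (Δ.take j).length = j := by simp; omega
    have h2 : (Δ.drop j).length = k := by simp; omega
    have := Planar.app (ihL (Δ.take j) h1) (ihR (Δ.drop j) h2)
    simpa [relabel, List.take_append_drop] using this
  | lam p ih =>
    intro Δ hΔ
    exact Planar.lam (ih (b :: Δ) (by simp [hΔ]))

lemma aeq_symm {Γ Δ : List ℕ} {t u : Term} (h : Aeq Γ t Δ u) : Aeq Δ u Γ t := by
  induction h with
  | var => exact Aeq.var _ _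
  | app h1 h2 ih1 ih2 => exact Aeq.app ih1 ih2
  | lam h ih => exact Aeq.lam ih

lemma aeq_var_inv {Γ Δ : List ℕ} {w : ℕ} {v : Term} (h : Aeq Γ (Term.var w) Δ v) :
    Γ = [w] ∧ ∃ z, Δ = [z] ∧ v = Term.var z := by
  cases h; exact ⟨rfl, _, rfl, rfl⟩

lemma aeq_app_inv {Γ Δ : List ℕ} {u₁ u₂ : Term} {v : Term}
    (h : Aeq Γ (Term.app u₁ u₂) Δ v) :
    ∃ Γ₁ Γ₂ Δ₁ Δ₂ v₁ v₂, Γ = Γ₁ ++ Γ₂ ∧ Δ = Δ₁ ++ Δ₂ ∧ v = Term.app v₁ v₂ ∧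
      Aeq Γ₁ u₁ Δ₁ v₁ ∧ Aeq Γ₂ u₂ Δ₂ v₂ := by
  cases h with
  | app h1 h2 => exact ⟨_, _, _, _, _, _, rfl, rfl, rfl, h1, h2⟩

lemma aeq_lam_inv {Γ Δ : List ℕ} {y : ℕ} {u : Term} {v : Term}
    (h : Aeq Γ (Term.lam y u) Δ v) :
    ∃ z Δ₀ v₀, Δ = Δ₀ ∧ v = Term.lam z v₀ ∧ Aeq (y :: Γ) u (z :: Δ₀) v₀ := by
  cases h with
  | lam h => exact ⟨_, _, _, rfl, rfl, h⟩

lemma aeq_trans {Γ Δ Ξ : List ℕ} {t u v : Term}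
    (h1 : Aeq Γ t Δ u) (h2 : Aeq Δ u Ξ v) : Aeq Γ t Ξ v := by
  induction h1 generalizing Ξ v with
  | var x y =>
    obtain ⟨-, z, rfl, rfl⟩ := aeq_var_inv h2
    exact Aeq.var _ _
  | @app Γ₁ Γ₂ Δ₁ Δ₂ t₁ t₂ u₁ u₂ ha hb iha ihb =>
    obtain ⟨Δa, Δb, Ξ₁, Ξ₂, v₁, v₂, hsplit, rfl, rfl, hc, hd⟩ := aeq_app_inv h2
    have len1 : (Δ₁.length : ℤ) = tdeg u₁ := (aeq_deg ha).2
    have len2 : (Δa.length : ℤ) = tdeg u₁ := (aeq_deg hc).1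
    have hlen : Δa.length = Δ₁.length := by omega
    obtain ⟨rfl, rfl⟩ := List.append_inj hsplit.symm hlen
    exact Aeq.app (iha hc) (ihb hd)
  | lam h ih =>
    obtain ⟨z, Δ₀, v₀, rfl, rfl, h'⟩ := aeq_lam_inv h2
    exact Aeq.lam (ih h')

lemma planar_aeq_relabel (b : ℕ) {i : ℕ} {Γ : List ℕ} {t : Term} {p : Skel i}
    (h : Planar Γ t p) : ∀ (Δ : List ℕ), Δ.length = Γ.length →
    Aeq Γ t Δ (relabel b p Δ) := by
  induction h with
  | var x =>
    intro Δ hΔ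
    match Δ, hΔ with
    | [w], _ => exact Aeq.var x w
  | @app j k Γ₁ Γ₂ t₁ t₂ pL pR h1 h2 ih1 ih2 =>
    intro Δ hΔ
    have hj : Γ₁.length = j := planar_length h1
    have hk : Γ₂.length = k := planar_length h2
    have e1 : (Δ.take j).length = Γ₁.length := by simp at hΔ ⊢; omega
    have e2 : (Δ.drop j).length = Γ₂.length := by simp at hΔ ⊢; omega
    have := Aeq.app (ih1 (Δ.take j) e1) (ih2 (Δ.drop j) e2)
    simpa [relabel, List.take_append_drop] using this
  | @lam i x Γ t p h ih =>
    intro Δ hΔ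
    exact Aeq.lam (ih (b :: Δ) (by simp [hΔ]))

lemma aeq_of_planar_planar {i : ℕ} {Γ Δ : List ℕ} {t u : Term} {p : Skel i}
    (h1 : Planar Γ t p) (h2 : Planar Δ u p) : Aeq Γ t Δ u := by
  have hlen : Δ.length = Γ.length := by
    rw [planar_length h1, planar_length h2]
  exact aeq_trans (planar_aeq_relabel 0 h1 Δ hlen)
    (aeq_symm (planar_aeq_relabel 0 h2 Δ rfl))

lemma aeq_planar {Γ Δ : List ℕ} {t u : Term} (h : Aeq Γ t Δ u) :
    ∀ {i : ℕ} {p : Skel i}, Planar Γ t p → Planar Δ u p := by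
  induction h with
  | var x y =>
    intro i p hp
    obtain ⟨-, hs⟩ := planar_var_inv hp
    obtain ⟨rfl, hh⟩ := sigma_skel_eq hs
    rw [eq_of_heq hh]
    exact Planar.var y
  | @app Γ₁ Γ₂ Δ₁ Δ₂ t₁ t₂ u₁ u₂ ha hb iha ihb =>
    intro i p hp
    obtain ⟨j, k, pL, pR, Γa, Γb, hsplit, hL, hR, hs⟩ := planar_app_inv hp
    obtain ⟨rfl, hh⟩ := sigma_skel_eq hs
    rw [eq_of_heq hh]
    have len1 : (Γ₁.length : ℤ) = tdeg t₁ := (aeq_deg ha).1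
    have len2 : (Γa.length : ℤ) = tdeg t₁ := planar_deg hL
    have hlen : Γa.length = Γ₁.length := by omega
    obtain ⟨rfl, rfl⟩ := List.append_inj hsplit hlen.symm
    exact Planar.app (iha hL) (ihb hR)
  | @lam x y Γ Δ t u h ih =>
    intro i p hp
    obtain ⟨p₀, hp₀, rfl⟩ := planar_lam_inv hp
    exact Planar.lam (ih hp₀)
lemma colB_not_lam {i : ℕ} {p : Skel i} (d : Col Color.B i p) :
    ∀ {i' : ℕ} {p₀ : Skel (i'+1)},
      (⟨i, p⟩ : Σ n, Skel n) = ⟨i', Skel.lam p₀⟩ → False := by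
  intro i' p₀ h
  cases d with
  | v => exact absurd (congrArg sLamProj h) (by simp [sLamProj])
  | a d1 d2 => exact absurd (congrArg sLamProj h) (by simp [sLamProj])

lemma colB_leaf_size {i : ℕ} {p : Skel i} (d : Col Color.B i p)
    (h : (⟨i, p⟩ : Σ n, Skel n) = ⟨1, Skel.leaf⟩) : d.size = 0 := by
  cases d with
  | v => rfl
  | a d1 d2 => exact absurd h.symm sigma_leaf_ne_app

lemma colB_app_inv {i : ℕ} {p : Skel i} (d : Col Color.B i p)
    {j k : ℕ} {pL : Skel j} {pR : Skel k}
    (h : (⟨i, p⟩ : Σ n, Skel n) = ⟨j + k, Skel.app pL pR⟩) :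
    ∃ (dl : Col Color.B j pL) (dr : Col Color.R k pR),
      d.size = dl.size + dr.size := by
  cases d with
  | v => exact absurd h sigma_leaf_ne_app
  | @a j' k' pL' pR' d1 d2 =>
    obtain ⟨h1, h2⟩ := sigma_app_inj h
    obtain ⟨rfl, hh1⟩ := sigma_skel_eq h1
    obtain ⟨rfl, hh2⟩ := sigma_skel_eq h2
    obtain rfl := eq_of_heq hh1
    obtain rfl := eq_of_heq hh2
    exact ⟨d1, d2, rfl⟩

lemma colR_app_inv {i : ℕ} {p : Skel i} (d : Col Color.R i p)
    {j k : ℕ} {pL : Skel j} {pR : Skel k}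
    (h : (⟨i, p⟩ : Σ n, Skel n) = ⟨j + k, Skel.app pL pR⟩) :
    ∃ (dl : Col Color.B j pL) (dr : Col Color.R k pR),
      d.size = dl.size + dr.size + 1 := by
  cases d with
  | s d' =>
    obtain ⟨dl, dr, he⟩ := colB_app_inv d' h
    exact ⟨dl, dr, by simp [Col.size, he]⟩
  | @l i₀ p₀ d' =>
    exact absurd h sigma_lam_ne_app

lemma colR_lam_inv {i : ℕ} {p : Skel i} (d : Col Color.R i p)
    {i' : ℕ} {p₀ : Skel (i'+1)}
    (h : (⟨i, p⟩ : Σ n, Skel n) = ⟨i', Skel.lam p₀⟩) :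
    ∃ (d₀ : Col Color.R (i'+1) p₀), d.size = d₀.size := by
  cases d with
  | s d' => exact absurd h (colB_not_lam d')
  | l d' =>
    obtain ⟨he, hh⟩ := sigma_skel_eq (sigma_lam_inj h)
    have hi : i = i' := by omega
    subst hi
    obtain rfl := eq_of_heq hh
    exact ⟨d', rfl⟩

lemma col_pos {c : Color} {i : ℕ} {p : Skel i} (d : Col c i p) :
    c = Color.B → 1 ≤ i := by
  induction d with
  | v => intro; exact le_refl 1
  | a d1 d2 ih1 ih2 => intro; have := ih1 rfl; omega
  | s d ih => intro h; exact Color.noConfusion h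
  | l d ih => intro h; exact Color.noConfusion h
lemma noX : ∀ (C : Ctx) {x : ℕ} {s : Term} {Γ : List ℕ} {i : ℕ} {p : Skel i},
    Planar Γ (C.fill (Term.app (Term.var x) s)) p → x ∉ C.binders → x ∈ Γ := by
  intro C
  induction C with
  | hole =>
    intro x s Γ i p h hb
    obtain ⟨j, k, pL, pR, Γ1, Γ2, rfl, h1, h2, hs⟩ := planar_app_inv h
    obtain ⟨rfl, -⟩ := planar_var_inv h1
    simp
  | appL C₀ u ih =>
    intro x s Γ i p h hb
    obtain ⟨j, k, pL, pR, Γ1, Γ2, rfl, h1, h2, hs⟩ := planar_app_inv h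
    have := ih h1 (by simpa [Ctx.binders] using hb)
    simp [this]
  | appR u C₀ ih =>
    intro x s Γ i p h hb
    obtain ⟨j, k, pL, pR, Γ1, Γ2, rfl, h1, h2, hs⟩ := planar_app_inv h
    have := ih h2 (by simpa [Ctx.binders] using hb)
    simp [this]
  | lam y C₀ ih =>
    intro x s Γ i p h hb
    obtain ⟨p₀, h₀, rfl⟩ := planar_lam_inv h
    simp [Ctx.binders] at hb
    have := ih h₀ hb.2
    rcases List.mem_cons.mp this with h' | h'
    · exact absurd h' hb.1
    · exact h'

lemma split_last {Γ1 Γ2 Γ₀ : List ℕ} {x : ℕ}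
    (h : Γ1 ++ Γ2 = Γ₀ ++ [x]) (h2 : Γ2 ≠ []) :
    ∃ Γ₂₀, Γ2 = Γ₂₀ ++ [x] ∧ Γ₀ = Γ1 ++ Γ₂₀ := by
  rcases List.append_eq_append_iff.mp h with ⟨a', ha1, ha2⟩ | ⟨c', hc1, hc2⟩
  · exact ⟨a', ha2, ha1⟩
  · cases c' with
    | nil => exact ⟨[], by simpa using hc2.symm, by simpa using hc1.symm⟩
    | cons c cs =>
      exfalso
      have hne : Γ2.length ≠ 0 := fun hh => h2 (List.eq_nil_of_length_eq_zero hh)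
      have hL := congrArg List.length hc2
      simp only [List.length_cons, List.length_append, List.length_nil] at hL
      omega

lemma hole_ctx_eq {Γ2 Γ₀ : List ℕ} {x : ℕ}
    (h : x :: Γ2 = Γ₀ ++ [x]) (hx : x ∉ Γ₀) : Γ2 = [] ∧ Γ₀ = [] := by
  cases Γ₀ with
  | nil =>
    refine ⟨?_, rfl⟩
    simpa using h
  | cons g gs =>
    exfalso
    have : x = g := by simpa using congrArg (List.headI) h
    exact hx (by simp [this])

lemma fill_ne_var : ∀ (C : Ctx) (a b : Term) (w : ℕ),
    C.fill (Term.app a b) ≠ Term.var w := by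
  intro C a b w
  cases C <;> simp [Ctx.fill]

lemma subterm_ctx {s t : Term} (h : Subterm s t) :
    ∃ C : Ctx, t = C.fill s ∧ ∀ w ∈ C.binders, w ∈ tBinders t := by
  induction h with
  | refl => exact ⟨Ctx.hole, rfl, by simp [Ctx.binders]⟩
  | @appL t u _ ih =>
    obtain ⟨C, rfl, hb⟩ := ih
    exact ⟨Ctx.appL C u, rfl, fun w hw => by simp [tBinders]; exact Or.inl (hb w hw)⟩
  | @appR t u _ ih =>
    obtain ⟨C, rfl, hb⟩ := ih
    exact ⟨Ctx.appR t C, rfl, fun w hw => by simp [tBinders]; exact Or.inr (hb w hw)⟩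
  | @lam t x _ ih =>
    obtain ⟨C, rfl, hb⟩ := ih
    refine ⟨Ctx.lam x C, rfl, fun w hw => ?_⟩
    simp [Ctx.binders] at hw
    rcases hw with rfl | hw
    · simp [tBinders]
    · simp [tBinders]; exact Or.inr (hb w hw)
lemma planar_fill_app_leaf {C : Ctx} {a b : Term} {Γ : List ℕ}
    (h : Planar Γ (C.fill (Term.app a b)) Skel.leaf) : False := by
  cases C with
  | hole => exact sigma_leaf_ne_app (planar_app_inv h).choose_spec.choose_spec.choose_spec.choose_spec.choose_spec.choose_spec.2.2.2
  | appL C₀ u => exact sigma_leaf_ne_app (planar_app_inv h).choose_spec.choose_spec.choose_spec.choose_spec.choose_spec.choose_spec.2.2.2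
  | appR u C₀ => exact sigma_leaf_ne_app (planar_app_inv h).choose_spec.choose_spec.choose_spec.choose_spec.choose_spec.choose_spec.2.2.2
  | lam y C₀ =>
    obtain ⟨p₀, -, hh⟩ := planar_lam_inv h
    cases hh

lemma analyze_hole {x : ℕ} {s : Term} {Γ Γ₀ : List ℕ} {i : ℕ} {p : Skel i}
    (h : Planar Γ (Term.app (Term.var x) s) p)
    (hΓ : Γ = Γ₀ ++ [x]) (hx : x ∉ Γ₀) :
    ∃ (pR : Skel 0), (⟨i, p⟩ : Σ n, Skel n) = ⟨1 + 0, Skel.app Skel.leaf pR⟩ ∧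
      Γ = [x] ∧ Γ₀ = [] ∧ Planar [] s pR := by
  obtain ⟨j, k, pL, pR, Γ1, Γ2, hsplit, h1, h2, hs⟩ := planar_app_inv h
  obtain ⟨rfl, hsL⟩ := planar_var_inv h1
  obtain ⟨rfl, hhL⟩ := sigma_skel_eq hsL
  obtain rfl := eq_of_heq hhL
  rw [hsplit] at hΓ
  obtain ⟨rfl, rfl⟩ := hole_ctx_eq (by simpa using hΓ) hx
  have hk : k = 0 := (planar_length h2).symm
  subst hk
  exact ⟨pR, hs, by simpa using hsplit, rfl, h2⟩

lemma analyze_appL {C₀ : Ctx} {u : Term} {x : ℕ} {s : Term} {Γ Γ₀ : List ℕ}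
    {i : ℕ} {p : Skel i}
    (h : Planar Γ (Term.app (C₀.fill (Term.app (Term.var x) s)) u) p)
    (hb : x ∉ C₀.binders) (hΓ : Γ = Γ₀ ++ [x]) (hx : x ∉ Γ₀) :
    ∃ (j : ℕ) (pL : Skel j) (pR : Skel 0),
      (⟨i, p⟩ : Σ n, Skel n) = ⟨j + 0, Skel.app pL pR⟩ ∧
      Planar Γ (C₀.fill (Term.app (Term.var x) s)) pL ∧ Planar [] u pR := by
  obtain ⟨j, k, pL, pR, Γ1, Γ2, hsplit, h1, h2, hs⟩ := planar_app_inv h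
  by_cases h2e : Γ2 = []
  · subst h2e
    have hk : k = 0 := (planar_length h2).symm
    subst hk
    simp only [List.append_nil] at hsplit
    subst hsplit
    exact ⟨j, pL, pR, hs, h1, h2⟩
  · exfalso
    obtain ⟨Γ₂₀, -, hΓ₀⟩ := split_last (hsplit.symm.trans hΓ) h2e
    have : x ∈ Γ1 := noX C₀ h1 hb
    exact hx (hΓ₀ ▸ (by simp [this]))

lemma analyze_appR {C₀ : Ctx} {u : Term} {x : ℕ} {s : Term} {Γ Γ₀ : List ℕ}
    {i : ℕ} {p : Skel i}
    (h : Planar Γ (Term.app u (C₀.fill (Term.app (Term.var x) s)) ) p)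
    (hb : x ∉ C₀.binders) (hΓ : Γ = Γ₀ ++ [x]) (hx : x ∉ Γ₀) :
    ∃ (j k : ℕ) (pL : Skel j) (pR : Skel k) (Γ1 Γ2 Γ₂₀ : List ℕ),
      (⟨i, p⟩ : Σ n, Skel n) = ⟨j + k, Skel.app pL pR⟩ ∧
      Γ = Γ1 ++ Γ2 ∧ Γ2 = Γ₂₀ ++ [x] ∧ x ∉ Γ₂₀ ∧ Γ₀ = Γ1 ++ Γ₂₀ ∧
      Planar Γ1 u pL ∧ Planar Γ2 (C₀.fill (Term.app (Term.var x) s)) pR := by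
  obtain ⟨j, k, pL, pR, Γ1, Γ2, hsplit, h1, h2, hs⟩ := planar_app_inv h
  have h2e : Γ2 ≠ [] := by
    intro he
    subst he
    exact absurd (noX C₀ h2 hb) (by simp)
  obtain ⟨Γ₂₀, hΓ2, hΓ₀⟩ := split_last (hsplit.symm.trans hΓ) h2e
  refine ⟨j, k, pL, pR, Γ1, Γ2, Γ₂₀, hs, hsplit, hΓ2, ?_, hΓ₀, h1, h2⟩
  intro hmem
  exact hx (hΓ₀ ▸ (by simp [hmem]))
lemma uniq2 : ∀ (C C' : Ctx) {x x' : ℕ} {s s' : Term} {Γ Γ' Γ₀ Γ₀' : List ℕ}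
    {i : ℕ} {p : Skel i},
    Planar Γ (C.fill (Term.app (Term.var x) s)) p →
    Planar Γ' (C'.fill (Term.app (Term.var x') s')) p →
    x ∉ C.binders → x' ∉ C'.binders →
    Γ = Γ₀ ++ [x] → x ∉ Γ₀ → Γ' = Γ₀' ++ [x'] → x' ∉ Γ₀' →
    (∃ (p₁ : Skel i), Planar Γ (C.fill (Term.var x)) p₁ ∧
        Planar Γ' (C'.fill (Term.var x')) p₁) ∧
    (∃ (q : Skel 0), Planar [] s q ∧ Planar [] s' q) := by
  intro C
  induction C with
  | hole =>
    intro C' x x' s s' Γ Γ' Γ₀ Γ₀' i p h1 h2 hb hb' hΓ hx hΓ' hx'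
    simp only [Ctx.fill] at h1
    obtain ⟨pR, hs, hΓe, hΓ₀e, hsP⟩ := analyze_hole h1 hΓ hx
    obtain ⟨rfl, hh0⟩ := sigma_skel_eq hs
    cases C' with
    | hole =>
      simp only [Ctx.fill] at h2 ⊢
      obtain ⟨pR', hs', hΓe', hΓ₀e', hsP'⟩ := analyze_hole h2 hΓ' hx'
      obtain ⟨hcL, hcR⟩ := sigma_app_inj (hs.symm.trans hs')
      obtain ⟨-, hh'⟩ := sigma_skel_eq hcR
      obtain rfl := eq_of_heq hh'
      subst hΓe hΓe'
      exact ⟨⟨Skel.leaf, Planar.var x, Planar.var x'⟩, ⟨pR, hsP, hsP'⟩⟩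
    | appL C₀' u' =>
      simp only [Ctx.fill] at h2
      obtain ⟨j', pL', pR'', hs', hL', hu'⟩ :=
        analyze_appL h2 (by simpa [Ctx.binders] using hb') hΓ' hx'
      obtain ⟨hcL, hcR⟩ := sigma_app_inj (hs.symm.trans hs')
      obtain ⟨rfl, hh'⟩ := sigma_skel_eq hcL
      obtain rfl := eq_of_heq hh'
      exact absurd hL' (fun hh => planar_fill_app_leaf hh)
    | appR u' C₀' =>
      simp only [Ctx.fill] at h2
      obtain ⟨j', k', pL', pR', Γ1', Γ2', Γ₂₀', hs', hsp', hΓ2', hx2', hΓ₀', hu', hR'⟩ :=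
        analyze_appR h2 (by simpa [Ctx.binders] using hb') hΓ' hx'
      obtain ⟨hcL, hcR⟩ := sigma_app_inj (hs.symm.trans hs')
      obtain ⟨hk, -⟩ := sigma_skel_eq hcR
      have := planar_length hR'
      rw [hΓ2'] at this
      simp at this
      omega
    | lam y' C₀' =>
      simp only [Ctx.fill] at h2
      obtain ⟨p₀, -, rfl⟩ := planar_lam_inv h2
      exact absurd hs sigma_lam_ne_app
  | appL C₀ u ih =>
    intro C' x x' s s' Γ Γ' Γ₀ Γ₀' i p h1 h2 hb hb' hΓ hx hΓ' hx'
    simp only [Ctx.fill] at h1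
    have hb₀ : x ∉ C₀.binders := by simpa [Ctx.binders] using hb
    obtain ⟨j, pL, pR, hs, hL, hu⟩ := analyze_appL h1 hb₀ hΓ hx
    obtain ⟨rfl, hh0⟩ := sigma_skel_eq hs
    cases C' with
    | hole =>
      simp only [Ctx.fill] at h2
      obtain ⟨pR', hs', hΓe', hΓ₀e', hsP'⟩ := analyze_hole h2 hΓ' hx'
      obtain ⟨hcL, hcR⟩ := sigma_app_inj (hs.symm.trans hs')
      obtain ⟨rfl, hh'⟩ := sigma_skel_eq hcL
      obtain rfl := eq_of_heq hh'
      exact absurd hL (fun hh => planar_fill_app_leaf hh)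
    | appL C₀' u' =>
      simp only [Ctx.fill] at h2 ⊢
      have hb₀' : x' ∉ C₀'.binders := by simpa [Ctx.binders] using hb'
      obtain ⟨j', pL', pR'', hs', hL', hu'⟩ := analyze_appL h2 hb₀' hΓ' hx'
      obtain ⟨hcL, hcR⟩ := sigma_app_inj (hs.symm.trans hs')
      obtain ⟨rfl, hh1⟩ := sigma_skel_eq hcL
      obtain rfl := eq_of_heq hh1
      obtain ⟨-, hh2⟩ := sigma_skel_eq hcR
      obtain rfl := eq_of_heq hh2
      obtain ⟨⟨p₁', hA, hB⟩, ⟨q, hq, hq'⟩⟩ := ih C₀' hL hL' hb₀ hb₀' hΓ hx hΓ' hx'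
      refine ⟨⟨Skel.app p₁' pR, ?_, ?_⟩, ⟨q, hq, hq'⟩⟩
      · simpa using Planar.app hA hu
      · simpa using Planar.app hB hu'
    | appR u' C₀' =>
      simp only [Ctx.fill] at h2
      obtain ⟨j', k', pL', pR', Γ1', Γ2', Γ₂₀', hs', hsp', hΓ2', hx2', hΓ₀', hu', hR'⟩ :=
        analyze_appR h2 (by simpa [Ctx.binders] using hb') hΓ' hx'
      obtain ⟨hcL, hcR⟩ := sigma_app_inj (hs.symm.trans hs')
      obtain ⟨hk, -⟩ := sigma_skel_eq hcR
      have := planar_length hR'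
      rw [hΓ2'] at this
      simp at this
      omega
    | lam y' C₀' =>
      simp only [Ctx.fill] at h2
      obtain ⟨p₀, -, rfl⟩ := planar_lam_inv h2
      exact absurd hs sigma_lam_ne_app
  | appR u C₀ ih =>
    intro C' x x' s s' Γ Γ' Γ₀ Γ₀' i p h1 h2 hb hb' hΓ hx hΓ' hx'
    simp only [Ctx.fill] at h1
    have hb₀ : x ∉ C₀.binders := by simpa [Ctx.binders] using hb
    obtain ⟨j, k, pL, pR, Γ1, Γ2, Γ₂₀, hs, hsp, hΓ2, hx2, hΓ₀e, hu, hR⟩ :=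
      analyze_appR h1 hb₀ hΓ hx
    obtain ⟨rfl, hh0⟩ := sigma_skel_eq hs
    have hk1 : 1 ≤ k := by
      have := planar_length hR
      rw [hΓ2] at this
      simp at this
      omega
    cases C' with
    | hole =>
      simp only [Ctx.fill] at h2
      obtain ⟨pR', hs', hΓe', hΓ₀e', hsP'⟩ := analyze_hole h2 hΓ' hx'
      obtain ⟨hcL, hcR⟩ := sigma_app_inj (hs.symm.trans hs')
      obtain ⟨hk, -⟩ := sigma_skel_eq hcR
      omega
    | appL C₀' u' =>
      simp only [Ctx.fill] at h2
      obtain ⟨j', pL', pR'', hs', hL', hu'⟩ :=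
        analyze_appL h2 (by simpa [Ctx.binders] using hb') hΓ' hx'
      obtain ⟨hcL, hcR⟩ := sigma_app_inj (hs.symm.trans hs')
      obtain ⟨hk, -⟩ := sigma_skel_eq hcR
      omega
    | appR u' C₀' =>
      simp only [Ctx.fill] at h2 ⊢
      have hb₀' : x' ∉ C₀'.binders := by simpa [Ctx.binders] using hb'
      obtain ⟨j', k', pL', pR', Γ1', Γ2', Γ₂₀', hs', hsp', hΓ2', hx2', hΓ₀', hu', hR'⟩ :=
        analyze_appR h2 hb₀' hΓ' hx'
      obtain ⟨hcL, hcR⟩ := sigma_app_inj (hs.symm.trans hs')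
      obtain ⟨rfl, hh1⟩ := sigma_skel_eq hcL
      obtain rfl := eq_of_heq hh1
      obtain ⟨rfl, hh2⟩ := sigma_skel_eq hcR
      obtain rfl := eq_of_heq hh2
      obtain ⟨⟨p₁', hA, hB⟩, ⟨q, hq, hq'⟩⟩ := ih C₀' hR hR' hb₀ hb₀' hΓ2 hx2 hΓ2' hx2'
      refine ⟨⟨Skel.app pL p₁', ?_, ?_⟩, ⟨q, hq, hq'⟩⟩
      · rw [hsp]; exact Planar.app hu hA
      · rw [hsp']; exact Planar.app hu' hB
    | lam y' C₀' =>
      simp only [Ctx.fill] at h2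
      obtain ⟨p₀, -, rfl⟩ := planar_lam_inv h2
      exact absurd hs sigma_lam_ne_app
  | lam y C₀ ih =>
    intro C' x x' s s' Γ Γ' Γ₀ Γ₀' i p h1 h2 hb hb' hΓ hx hΓ' hx'
    simp only [Ctx.fill] at h1
    simp only [Ctx.binders, List.mem_cons, not_or] at hb
    obtain ⟨hxy, hb₀⟩ := hb
    obtain ⟨p₀, hP₀, rfl⟩ := planar_lam_inv h1
    cases C' with
    | hole =>
      simp only [Ctx.fill] at h2
      obtain ⟨jj, kk, pLL, pRR, G1, G2, hspl, hh1, hh2, hss⟩ := planar_app_inv h2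
      exact absurd hss sigma_lam_ne_app
    | appL C₀' u' =>
      simp only [Ctx.fill] at h2
      obtain ⟨jj, kk, pLL, pRR, G1, G2, hspl, hh1, hh2, hss⟩ := planar_app_inv h2
      exact absurd hss sigma_lam_ne_app
    | appR u' C₀' =>
      simp only [Ctx.fill] at h2
      obtain ⟨jj, kk, pLL, pRR, G1, G2, hspl, hh1, hh2, hss⟩ := planar_app_inv h2
      exact absurd hss sigma_lam_ne_app
    | lam y' C₀' =>
      simp only [Ctx.fill] at h2 ⊢
      simp only [Ctx.binders, List.mem_cons, not_or] at hb'
      obtain ⟨hxy', hb₀'⟩ := hb'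
      obtain ⟨p₀', hP₀', hh'⟩ := planar_lam_inv h2
      have hpp : p₀ = p₀' := by
        injection hh'
      obtain ⟨⟨p₁', hA, hB⟩, ⟨q, hq, hq'⟩⟩ :=
        ih C₀' (Γ₀ := y :: Γ₀) (Γ₀' := y' :: Γ₀') hP₀ (hpp ▸ hP₀') hb₀ hb₀'
          (by simp [hΓ]) (by simp [hx, Ne.symm hxy, hxy]) (by simp [hΓ'])
          (by simp [hx', Ne.symm hxy', hxy'])
      exact ⟨⟨Skel.lam p₁', Planar.lam hA, Planar.lam hB⟩, ⟨q, hq, hq'⟩⟩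
lemma grand (b z : ℕ) : ∀ (C : Ctx) {x : ℕ} {s : Term} {Γ Γ₀ Δ Δ₀ : List ℕ}
    {i : ℕ} {p : Skel i} {c : Color},
    Planar Γ (C.fill (Term.app (Term.var x) s)) p → x ∉ C.binders →
    Γ = Γ₀ ++ [x] → x ∉ Γ₀ → Δ = Δ₀ ++ [z] → Δ.length = Γ.length →
    ∀ (d : Col c i p),
    ∃ (q : Skel 0) (p₁ : Skel i) (C' : Ctx) (e : Col Color.R 0 q)
      (d₁ : Col c i p₁),
      relabel b p Δ = C'.fill (Term.app (Term.var z) (relabel b q [])) ∧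
      relabel b p₁ Δ = C'.fill (Term.var z) ∧
      (∀ w ∈ C'.binders, w = b) ∧
      d.size = d₁.size + e.size := by
  intro C
  induction C with
  | hole =>
    intro x s Γ Γ₀ Δ Δ₀ i p c h hb hΓ hx hΔ hlen d
    simp only [Ctx.fill] at h
    obtain ⟨pR, hs, hΓe, hΓ₀e, hsP⟩ := analyze_hole h hΓ hx
    obtain ⟨rfl, hh⟩ := sigma_skel_eq hs
    obtain rfl := eq_of_heq hh
    have hΔe : Δ = [z] := by
      subst hΓe hΔ
      simp at hlen
      simp [hlen]
    subst hΔe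
    cases c with
    | B =>
      obtain ⟨dl, dr, hsz⟩ := colB_app_inv d hs
      have hdl : dl.size = 0 := colB_leaf_size dl rfl
      refine ⟨pR, Skel.leaf, Ctx.hole, dr, Col.v, ?_, ?_, ?_, ?_⟩
      · simp [relabel, Ctx.fill]
      · simp [relabel, Ctx.fill]
      · simp [Ctx.binders]
      · simp [Col.size]; omega
    | R =>
      obtain ⟨dl, dr, hsz⟩ := colR_app_inv d hs
      have hdl : dl.size = 0 := colB_leaf_size dl rfl
      refine ⟨pR, Skel.leaf, Ctx.hole, dr, Col.s Col.v, ?_, ?_, ?_, ?_⟩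
      · simp [relabel, Ctx.fill]
      · simp [relabel, Ctx.fill]
      · simp [Ctx.binders]
      · simp [Col.size]; omega
  | appL C₀ u ih =>
    intro x s Γ Γ₀ Δ Δ₀ i p c h hb hΓ hx hΔ hlen d
    simp only [Ctx.fill] at h
    have hb₀ : x ∉ C₀.binders := by simpa [Ctx.binders] using hb
    obtain ⟨j, pL, pR, hs, hL, hu⟩ := analyze_appL h hb₀ hΓ hx
    obtain ⟨hi, hh⟩ := sigma_skel_eq hs
    subst hi
    obtain rfl := eq_of_heq hh
    have hΓlen : Γ.length = i := planar_length hL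
    have hTake : Δ.take i = Δ := List.take_of_length_le (by omega)
    cases c with
    | B =>
      obtain ⟨dl, dr, hsz⟩ := colB_app_inv d hs
      obtain ⟨q, pA, C₀', e, dA, hrel1, hrel2, hbind, hsz2⟩ :=
        ih hL hb₀ hΓ hx hΔ hlen dl
      refine ⟨q, Skel.app pA pR, Ctx.appL C₀' (relabel b pR (Δ.drop i)),
        e, Col.a dA dr, ?_, ?_, ?_, ?_⟩
      · simp only [relabel, Ctx.fill]
        rw [hTake, hrel1]
      · simp only [relabel, Ctx.fill]
        rw [hTake, hrel2]
      · simpa [Ctx.binders] using hbind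
      · simp [Col.size]; omega
    | R =>
      obtain ⟨dl, dr, hsz⟩ := colR_app_inv d hs
      obtain ⟨q, pA, C₀', e, dA, hrel1, hrel2, hbind, hsz2⟩ :=
        ih hL hb₀ hΓ hx hΔ hlen dl
      refine ⟨q, Skel.app pA pR, Ctx.appL C₀' (relabel b pR (Δ.drop i)),
        e, Col.s (Col.a dA dr), ?_, ?_, ?_, ?_⟩
      · simp only [relabel, Ctx.fill]
        rw [hTake, hrel1]
      · simp only [relabel, Ctx.fill]
        rw [hTake, hrel2]
      · simpa [Ctx.binders] using hbind
      · simp [Col.size]; omega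
  | appR u C₀ ih =>
    intro x s Γ Γ₀ Δ Δ₀ i p c h hb hΓ hx hΔ hlen d
    simp only [Ctx.fill] at h
    have hb₀ : x ∉ C₀.binders := by simpa [Ctx.binders] using hb
    obtain ⟨j, k, pL, pR, Γ1, Γ2, Γ₂₀, hs, hsp, hΓ2, hx2, hΓ₀e, hu, hR⟩ :=
      analyze_appR h hb₀ hΓ hx
    obtain ⟨hi, hh⟩ := sigma_skel_eq hs
    subst hi
    obtain rfl := eq_of_heq hh
    have hj : Γ1.length = j := planar_length hu
    have hk : Γ2.length = k := planar_length hR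
    have hk1 : 1 ≤ k := by
      rw [hΓ2] at hk
      simp at hk
      omega
    have hΔ₀len : Δ₀.length = j + k - 1 := by
      have := congrArg List.length hΔ
      simp at this
      rw [hsp] at hlen
      simp [hj, hk] at hlen ⊢
      omega
    have hDropΔ : Δ.drop j = Δ₀.drop j ++ [z] := by
      rw [hΔ]
      exact List.drop_append_of_le_length (by omega)
    have hlen2 : (Δ.drop j).length = Γ2.length := by
      simp [hk]
      rw [hsp] at hlen
      simp [hj, hk] at hlen
      omega
    cases c with
    | B =>
      obtain ⟨dl, dr, hsz⟩ := colB_app_inv d hs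
      obtain ⟨q, pB, C₀', e, dB, hrel1, hrel2, hbind, hsz2⟩ :=
        ih hR hb₀ hΓ2 hx2 hDropΔ hlen2 dr
      refine ⟨q, Skel.app pL pB, Ctx.appR (relabel b pL (Δ.take j)) C₀',
        e, Col.a dl dB, ?_, ?_, ?_, ?_⟩
      · simp only [relabel, Ctx.fill]
        rw [hrel1]
      · simp only [relabel, Ctx.fill]
        rw [hrel2]
      · simpa [Ctx.binders] using hbind
      · simp [Col.size]; omega
    | R =>
      obtain ⟨dl, dr, hsz⟩ := colR_app_inv d hs
      obtain ⟨q, pB, C₀', e, dB, hrel1, hrel2, hbind, hsz2⟩ :=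
        ih hR hb₀ hΓ2 hx2 hDropΔ hlen2 dr
      refine ⟨q, Skel.app pL pB, Ctx.appR (relabel b pL (Δ.take j)) C₀',
        e, Col.s (Col.a dl dB), ?_, ?_, ?_, ?_⟩
      · simp only [relabel, Ctx.fill]
        rw [hrel1]
      · simp only [relabel, Ctx.fill]
        rw [hrel2]
      · simpa [Ctx.binders] using hbind
      · simp [Col.size]; omega
  | lam y C₀ ih =>
    intro x s Γ Γ₀ Δ Δ₀ i p c h hb hΓ hx hΔ hlen d
    simp only [Ctx.fill] at h
    simp only [Ctx.binders, List.mem_cons, not_or] at hb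
    obtain ⟨hxy, hb₀⟩ := hb
    obtain ⟨p₀, hP₀, rfl⟩ := planar_lam_inv h
    cases c with
    | B => exact absurd rfl (colB_not_lam d (i' := i) (p₀ := p₀))
    | R =>
      obtain ⟨d₀, hsz⟩ := colR_lam_inv d (i' := i) (p₀ := p₀) rfl
      obtain ⟨q, pA, C₀', e, dA, hrel1, hrel2, hbind, hsz2⟩ :=
        ih (Γ₀ := y :: Γ₀) (Δ := b :: Δ) (Δ₀ := b :: Δ₀) hP₀ hb₀ (by simp [hΓ])
          (by simp [hx, hxy]) (by simp [hΔ]) (by simp [hlen]) d₀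
      refine ⟨q, Skel.lam pA, Ctx.lam b C₀', e, Col.l dA, ?_, ?_, ?_, ?_⟩
      · simp only [relabel, Ctx.fill]
        rw [hrel1]
      · simp only [relabel, Ctx.fill]
        rw [hrel2]
      · intro w hw
        simp [Ctx.binders] at hw
        rcases hw with rfl | hw
        · rfl
        · exact hbind w hw
      · simp [Col.size]; omega

/-- Proposition 4.4: a function-open normal planar term `[x]t` decomposes
into a unique (up to α-equivalence) pair of normal planar terms `[x]t₁` and
`[y]t₂`, with the size of `t` equal to the sum of the sizes of `t₁` and
`t₂`. -/
theorem function_open_decomposition (x : ℕ) (t : Term) {p : Skel 1}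
    (ht : Planar [x] t p) (π : Col Color.R 1 p) (hfo : FunctionOpenA x t) :
    ∃ (y : ℕ) (t₁ t₂ : Term) (C : Ctx),
      FunDecomp x t π y t₁ t₂ C ∧
      ∀ (y' : ℕ) (t₁' t₂' : Term) (C' : Ctx),
        FunDecomp x t π y' t₁' t₂' C' →
          Aeq [x] t₁ [x] t₁' ∧ Aeq [y] t₂ [y'] t₂' := by
  obtain ⟨y₀, t', hae, hnb, u, hsub⟩ := hfo
  have hpt' : Planar [y₀] t' p := aeq_planar hae ht
  obtain ⟨C₀, rfl, hbsub⟩ := subterm_ctx hsub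
  have hb₀ : y₀ ∉ C₀.binders := fun h => hnb (hbsub _ h)
  obtain ⟨q, p₁, C', e, d₁, hrel1, hrel2, hbind, hszeq⟩ :=
    grand (x + 1) x C₀ (Γ₀ := []) (Δ := [x]) (Δ₀ := []) hpt' hb₀ rfl
      (by simp) rfl rfl π
  have hxC' : x ∉ C'.binders := by
    intro h
    have := hbind x h
    omega
  cases e with
  | s eB => exact absurd (col_pos eB rfl) (by omega)
  | @l i0 q₂ e₂ =>
    have hq2 : relabel (x + 1) (Skel.lam q₂) [] =
        Term.lam (x + 1) (relabel (x + 1) q₂ [x + 1]) := by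
      simp [relabel]
    rw [hq2] at hrel1
    set t₂ := relabel (x + 1) q₂ [x + 1] with ht₂
    set t₁ := C'.fill (Term.var x) with ht₁def
    have hPrel : Planar [x] (relabel (x + 1) p [x]) p :=
      relabel_planar (x + 1) p [x] rfl
    rw [hrel1] at hPrel
    have hAeqT : Aeq [x] t [x]
        (C'.fill (Term.app (Term.var x) (Term.lam (x + 1) t₂))) :=
      aeq_of_planar_planar ht hPrel
    have hPt₁ : Planar [x] t₁ p₁ := by
      have := relabel_planar (x + 1) p₁ [x] rfl
      rwa [hrel2] at this
    have hPt₂ : Planar [x + 1] t₂ q₂ := relabel_planar (x + 1) q₂ [x + 1] rfl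
    refine ⟨x + 1, t₁, t₂, C', ⟨rfl, hxC', hAeqT, p₁, q₂, d₁, e₂, hPt₁, hPt₂, ?_⟩, ?_⟩
    · simpa [Col.size] using hszeq
    · rintro y' t₁' t₂' C'' ⟨rfl, hxb'', hae'', p₁', p₂', π₁', π₂', hP1', hP2', hszeq'⟩
      have hT'' : Planar [x] (C''.fill (Term.app (Term.var x) (Term.lam y' t₂'))) p :=
        aeq_planar hae'' ht
      obtain ⟨⟨p₁s, hA, hB⟩, ⟨qs, hqA, hqB⟩⟩ :=
        uniq2 C' C'' (Γ₀ := []) (Γ₀' := []) hPrel hT'' hxC' hxb'' rfl (by simp)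
          rfl (by simp)
      constructor
      · exact aeq_of_planar_planar hA hB
      · obtain ⟨q₀, hPq, rfl⟩ := planar_lam_inv hqA
        obtain ⟨q₀', hPq', heq⟩ := planar_lam_inv hqB
        have : q₀ = q₀' := by injection heq
        subst this
        exact aeq_of_planar_planar hPq hPq'
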